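/- Identify ℂ^{m₁+m₂} ⊗ ℂ^n with (m₁+m₂) × n complex matrices, and embed ℂ^{m₁} ⊗ ℂ^n and ℂ^{m₂} ⊗ ℂ^n as the subspaces of matrices supported on the first m₁ rows and last m₂ rows respectively. If S₁ is an unextendible product basis of the first subspace and S₂ is an unextendible product basis of the second, then S₁ ∪ S₂ is an unextendible product basis of ℂ^{m₁+m₂} ⊗ ℂ^n. -/

import Mathlib

/-- The Frobenius (Hilbert–Schmidt) inner product on complex matrices. -/
noncomputable def frob {a b : ℕ} (M N : Matrix (Fin a) (Fin b) ℂ) : ℂ :=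
  ∑ i, ∑ j, star (M i j) * N i j

/-- An unextendible product basis of `ℂ^a ⊗ ℂ^b`, viewed as `a × b` complex
matrices with the Frobenius inner product. -/
def IsUPB {a b : ℕ} (S : Finset (Matrix (Fin a) (Fin b) ℂ)) : Prop :=
  (∀ M ∈ S, M.rank = 1) ∧
  (∀ M ∈ S, ∀ N ∈ S, frob M N = if M = N then 1 else 0) ∧
  S.card < a * b ∧
  ∀ N : Matrix (Fin a) (Fin b) ℂ, N ≠ 0 → (∀ M ∈ S, frob M N = 0) → 2 ≤ N.rank

/-- Embedding of `ℂ^{m₁} ⊗ ℂ^n` as the matrices supported on the first `m₁` rows. -/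
def embedT {m₁ m₂ n : ℕ} (A : Matrix (Fin m₁) (Fin n) ℂ) :
    Matrix (Fin (m₁ + m₂)) (Fin n) ℂ :=
  Matrix.of fun i j => if h : (i : ℕ) < m₁ then A ⟨i, h⟩ j else 0

/-- Embedding of `ℂ^{m₂} ⊗ ℂ^n` as the matrices supported on the last `m₂` rows. -/
def embedB {m₁ m₂ n : ℕ} (A : Matrix (Fin m₂) (Fin n) ℂ) :
    Matrix (Fin (m₁ + m₂)) (Fin n) ℂ :=
  Matrix.of fun i j => if h : (i : ℕ) < m₁ then 0
    else A ⟨(i : ℕ) - m₁, by have := i.isLt; omega⟩ j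

section aux

variable {m₁ m₂ n : ℕ}

lemma embedT_castAdd (A : Matrix (Fin m₁) (Fin n) ℂ) (i : Fin m₁) (j : Fin n) :
    embedT (m₂ := m₂) A (Fin.castAdd m₂ i) j = A i j := by
  simp [embedT, Fin.coe_castAdd, i.isLt]

lemma embedT_natAdd (A : Matrix (Fin m₁) (Fin n) ℂ) (i : Fin m₂) (j : Fin n) :
    embedT (m₂ := m₂) A (Fin.natAdd m₁ i) j = 0 := by
  simp [embedT]

lemma embedB_castAdd (A : Matrix (Fin m₂) (Fin n) ℂ) (i : Fin m₁) (j : Fin n) :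
    embedB (m₁ := m₁) A (Fin.castAdd m₂ i) j = 0 := by
  simp [embedB, Fin.coe_castAdd, i.isLt]

lemma embedB_natAdd (A : Matrix (Fin m₂) (Fin n) ℂ) (i : Fin m₂) (j : Fin n) :
    embedB (m₁ := m₁) A (Fin.natAdd m₁ i) j = A i j := by
  have h : ¬ ((Fin.natAdd m₁ i : ℕ) < m₁) := by simp
  simp only [embedB, Matrix.of_apply, dif_neg h]
  congr 1
  ext
  simp

lemma frob_embedT_left (A : Matrix (Fin m₁) (Fin n) ℂ)
    (N : Matrix (Fin (m₁ + m₂)) (Fin n) ℂ) :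
    frob (embedT (m₂ := m₂) A) N = frob A (N.submatrix (Fin.castAdd m₂) id) := by
  unfold frob
  rw [Fin.sum_univ_add]
  have : ∀ i : Fin m₂, ∑ j, star (embedT (m₂ := m₂) A (Fin.natAdd m₁ i) j) *
      N (Fin.natAdd m₁ i) j = 0 := by
    intro i
    apply Finset.sum_eq_zero
    intro j _
    rw [embedT_natAdd]; simp
  rw [Finset.sum_congr rfl fun i _ => this i]
  simp [embedT_castAdd, Matrix.submatrix_apply]

lemma frob_embedB_left (A : Matrix (Fin m₂) (Fin n) ℂ)
    (N : Matrix (Fin (m₁ + m₂)) (Fin n) ℂ) :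
    frob (embedB (m₁ := m₁) A) N = frob A (N.submatrix (Fin.natAdd m₁) id) := by
  unfold frob
  rw [Fin.sum_univ_add]
  have : ∀ i : Fin m₁, ∑ j, star (embedB (m₁ := m₁) A (Fin.castAdd m₂ i) j) *
      N (Fin.castAdd m₂ i) j = 0 := by
    intro i
    apply Finset.sum_eq_zero
    intro j _
    rw [embedB_castAdd]; simp
  rw [Finset.sum_congr rfl fun i _ => this i]
  simp [embedB_natAdd, Matrix.submatrix_apply]

lemma submatrix_castAdd_embedT (A : Matrix (Fin m₁) (Fin n) ℂ) :
    (embedT (m₂ := m₂) A).submatrix (Fin.castAdd m₂) id = A := by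
  ext i j; simp [Matrix.submatrix_apply, embedT_castAdd]

lemma submatrix_natAdd_embedB (A : Matrix (Fin m₂) (Fin n) ℂ) :
    (embedB (m₁ := m₁) A).submatrix (Fin.natAdd m₁) id = A := by
  ext i j; simp [Matrix.submatrix_apply, embedB_natAdd]

lemma submatrix_castAdd_embedB (A : Matrix (Fin m₂) (Fin n) ℂ) :
    (embedB (m₁ := m₁) A).submatrix (Fin.castAdd m₂) id = 0 := by
  ext i j; simp [Matrix.submatrix_apply, embedB_castAdd]

lemma submatrix_natAdd_embedT (A : Matrix (Fin m₁) (Fin n) ℂ) :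
    (embedT (m₂ := m₂) A).submatrix (Fin.natAdd m₁) id = 0 := by
  ext i j; simp [Matrix.submatrix_apply, embedT_natAdd]

lemma frob_zero_right (A : Matrix (Fin m₁) (Fin n) ℂ) : frob A 0 = 0 := by
  simp [frob]

lemma embedT_injective : Function.Injective (embedT (m₁ := m₁) (m₂ := m₂) (n := n)) := by
  intro A B h
  have := congrArg (fun M => M.submatrix (Fin.castAdd m₂) id) h
  simpa [submatrix_castAdd_embedT] using this

lemma embedB_injective : Function.Injective (embedB (m₁ := m₁) (m₂ := m₂) (n := n)) := by
  intro A B h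
  have := congrArg (fun M => M.submatrix (Fin.natAdd m₁) id) h
  simpa [submatrix_natAdd_embedB] using this

lemma rank_submatrix_rows_le {k K : ℕ} (f : Fin k → Fin K)
    (N : Matrix (Fin K) (Fin n) ℂ) : (N.submatrix f id).rank ≤ N.rank := by
  rw [Matrix.rank_eq_finrank_span_row, Matrix.rank_eq_finrank_span_row]
  apply Submodule.finrank_mono
  apply Submodule.span_mono
  rintro x ⟨i, rfl⟩
  exact ⟨f i, rfl⟩

lemma rank_embedT (A : Matrix (Fin m₁) (Fin n) ℂ) :
    (embedT (m₂ := m₂) A).rank = A.rank := by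
  rw [Matrix.rank_eq_finrank_span_row, Matrix.rank_eq_finrank_span_row]
  suffices hsp : Submodule.span ℂ (Set.range (embedT (m₂ := m₂) A)) =
      Submodule.span ℂ (Set.range A) by
    exact congrArg (fun s : Submodule ℂ (Fin n → ℂ) => Module.finrank ℂ s) hsp
  apply le_antisymm
  · rw [Submodule.span_le]
    rintro x ⟨i, rfl⟩
    by_cases h : (i : ℕ) < m₁
    · have : (embedT (m₂ := m₂) A) i = A ⟨i, h⟩ := by
        funext j; simp [embedT, h]
      rw [this]
      exact Submodule.subset_span ⟨⟨i, h⟩, rfl⟩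
    · have : (embedT (m₂ := m₂) A) i = 0 := by
        funext j; simp [embedT, h]
      rw [this]
      exact Submodule.zero_mem _
  · rw [Submodule.span_le]
    rintro x ⟨i, rfl⟩
    have : A i = (embedT (m₂ := m₂) A) (Fin.castAdd m₂ i) := by
      funext j; rw [embedT_castAdd]
    rw [this]
    exact Submodule.subset_span ⟨_, rfl⟩

lemma rank_embedB (A : Matrix (Fin m₂) (Fin n) ℂ) :
    (embedB (m₁ := m₁) A).rank = A.rank := by
  rw [Matrix.rank_eq_finrank_span_row, Matrix.rank_eq_finrank_span_row]
  suffices hsp : Submodule.span ℂ (Set.range (embedB (m₁ := m₁) A)) =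
      Submodule.span ℂ (Set.range A) by
    exact congrArg (fun s : Submodule ℂ (Fin n → ℂ) => Module.finrank ℂ s) hsp
  apply le_antisymm
  · rw [Submodule.span_le]
    rintro x ⟨i, rfl⟩
    by_cases h : (i : ℕ) < m₁
    · have : (embedB (m₁ := m₁) A) i = 0 := by
        funext j; simp [embedB, h]
      rw [this]
      exact Submodule.zero_mem _
    · have : (embedB (m₁ := m₁) A) i = A ⟨(i : ℕ) - m₁, by have := i.isLt; omega⟩ := by
        funext j; simp [embedB, h]
      rw [this]
      exact Submodule.subset_span ⟨_, rfl⟩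
  · rw [Submodule.span_le]
    rintro x ⟨i, rfl⟩
    have : A i = (embedB (m₁ := m₁) A) (Fin.natAdd m₁ i) := by
      funext j; rw [embedB_natAdd]
    rw [this]
    exact Submodule.subset_span ⟨_, rfl⟩

end aux

/-- If `S₁` is a UPB of `ℂ^{m₁} ⊗ ℂ^n` and `S₂` is a UPB of `ℂ^{m₂} ⊗ ℂ^n`,
then, embedded as the top and bottom row blocks, their union is a UPB of
`ℂ^{m₁+m₂} ⊗ ℂ^n`. -/
theorem union_of_row_UPBs_is_UPB {m₁ m₂ n : ℕ}
    (S₁ : Finset (Matrix (Fin m₁) (Fin n) ℂ))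
    (S₂ : Finset (Matrix (Fin m₂) (Fin n) ℂ))
    (h₁ : IsUPB S₁) (h₂ : IsUPB S₂) :
    IsUPB (S₁.image (embedT (m₂ := m₂)) ∪ S₂.image (embedB (m₁ := m₁))) := by
  obtain ⟨h₁rk, h₁orth, h₁card, h₁ext⟩ := h₁
  obtain ⟨h₂rk, h₂orth, h₂card, h₂ext⟩ := h₂
  -- cross inner products vanish
  have crossTB : ∀ (A : Matrix (Fin m₁) (Fin n) ℂ) (B : Matrix (Fin m₂) (Fin n) ℂ),
      frob (embedT (m₂ := m₂) A) (embedB (m₁ := m₁) B) = 0 := by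
    intro A B
    rw [frob_embedT_left, submatrix_castAdd_embedB, frob_zero_right]
  have crossBT : ∀ (B : Matrix (Fin m₂) (Fin n) ℂ) (A : Matrix (Fin m₁) (Fin n) ℂ),
      frob (embedB (m₁ := m₁) B) (embedT (m₂ := m₂) A) = 0 := by
    intro B A
    rw [frob_embedB_left, submatrix_natAdd_embedT, frob_zero_right]
  -- the two image sets are disjoint on actual elements
  have neTB : ∀ A ∈ S₁, ∀ B ∈ S₂,
      embedT (m₂ := m₂) A ≠ embedB (m₁ := m₁) B := by
    intro A hA B hB heq
    have h1 : frob (embedT (m₂ := m₂) A) (embedT (m₂ := m₂) A) = 1 := by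
      rw [frob_embedT_left, submatrix_castAdd_embedT]
      simpa using h₁orth A hA A hA
    rw [show embedT (m₂ := m₂) A = embedB (m₁ := m₁) B from heq] at h1
    nth_rewrite 1 [← heq] at h1
    rw [crossTB] at h1
    exact zero_ne_one h1
  refine ⟨?_, ?_, ?_, ?_⟩
  · -- rank one
    intro M hM
    rcases Finset.mem_union.1 hM with hM | hM
    · obtain ⟨A, hA, rfl⟩ := Finset.mem_image.1 hM
      rw [rank_embedT]; exact h₁rk A hA
    · obtain ⟨B, hB, rfl⟩ := Finset.mem_image.1 hM
      rw [rank_embedB]; exact h₂rk B hB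
  · -- orthonormality
    intro M hM N hN
    rcases Finset.mem_union.1 hM with hM | hM <;>
      rcases Finset.mem_union.1 hN with hN | hN
    · obtain ⟨A, hA, rfl⟩ := Finset.mem_image.1 hM
      obtain ⟨B, hB, rfl⟩ := Finset.mem_image.1 hN
      rw [frob_embedT_left, submatrix_castAdd_embedT, h₁orth A hA B hB]
      by_cases h : A = B
      · simp [h]
      · rw [if_neg h, if_neg (fun e => h (embedT_injective e))]
    · obtain ⟨A, hA, rfl⟩ := Finset.mem_image.1 hM
      obtain ⟨B, hB, rfl⟩ := Finset.mem_image.1 hN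
      rw [crossTB, if_neg (neTB A hA B hB)]
    · obtain ⟨B, hB, rfl⟩ := Finset.mem_image.1 hM
      obtain ⟨A, hA, rfl⟩ := Finset.mem_image.1 hN
      rw [crossBT, if_neg (fun e => neTB A hA B hB e.symm)]
    · obtain ⟨A, hA, rfl⟩ := Finset.mem_image.1 hM
      obtain ⟨B, hB, rfl⟩ := Finset.mem_image.1 hN
      rw [frob_embedB_left, submatrix_natAdd_embedB, h₂orth A hA B hB]
      by_cases h : A = B
      · simp [h]
      · rw [if_neg h, if_neg (fun e => h (embedB_injective e))]
  · -- cardinality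
    have hc : (S₁.image (embedT (m₂ := m₂)) ∪ S₂.image (embedB (m₁ := m₁))).card ≤
        S₁.card + S₂.card :=
      (Finset.card_union_le _ _).trans
        (add_le_add (Finset.card_image_le) (Finset.card_image_le))
    have : (m₁ + m₂) * n = m₁ * n + m₂ * n := by ring
    omega
  · -- unextendibility
    intro N hN horth
    set N₁ := N.submatrix (Fin.castAdd m₂) id with hN₁def
    set N₂ := N.submatrix (Fin.natAdd m₁) id with hN₂def
    have horth₁ : ∀ M ∈ S₁, frob M N₁ = 0 := by
      intro M hM
      rw [← frob_embedT_left]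
      exact horth _ (Finset.mem_union_left _ (Finset.mem_image_of_mem _ hM))
    have horth₂ : ∀ M ∈ S₂, frob M N₂ = 0 := by
      intro M hM
      rw [← frob_embedB_left]
      exact horth _ (Finset.mem_union_right _ (Finset.mem_image_of_mem _ hM))
    have hsplit : N₁ ≠ 0 ∨ N₂ ≠ 0 := by
      by_contra h
      push_neg at h
      obtain ⟨e1, e2⟩ := h
      apply hN
      ext i j
      by_cases h : (i : ℕ) < m₁
      · have : N i j = N₁ ⟨i, h⟩ j := by
          rw [hN₁def]
          simp only [Matrix.submatrix_apply, id]
          congr 1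
        rw [this, e1]; rfl
      · have : N i j = N₂ ⟨(i : ℕ) - m₁, by have := i.isLt; omega⟩ j := by
          rw [hN₂def]
          simp only [Matrix.submatrix_apply, id]
          congr 1
          ext
          simp
          omega
        rw [this, e2]; rfl
    rcases hsplit with h | h
    · exact le_trans (h₁ext N₁ h horth₁) (rank_submatrix_rows_le _ N)
    · exact le_trans (h₂ext N₂ h horth₂) (rank_submatrix_rows_le _ N)
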